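/- For every real number R with 0 ≤ R ≤ 1/2, the series identity ∑_{m=1}^{∞} sin²(2πmR)/m² = π² R(1 − 2R) holds. -/

import Mathlib

open Real

/-- For every real `0 ≤ R ≤ 1/2`, `∑_{m=1}^∞ sin²(2πmR)/m² = π² R(1 − 2R)`. -/
theorem sum_sin_sq_div_sq (R : ℝ) (h0 : 0 ≤ R) (h1 : R ≤ 1 / 2) :
    ∑' m : ℕ, Real.sin (2 * Real.pi * (m + 1) * R) ^ 2 / ((m : ℝ) + 1) ^ 2
      = Real.pi ^ 2 * R * (1 - 2 * R) := by
  have hx : (2 * R) ∈ Set.Icc (0:ℝ) 1 := ⟨by linarith, by linarith⟩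
  have h0' : (0:ℝ) ∈ Set.Icc (0:ℝ) 1 := ⟨le_refl _, zero_le_one⟩
  have hB : ∀ x : ℝ, (Polynomial.map (algebraMap ℚ ℝ) (Polynomial.bernoulli (2 * 1))).eval x
      = x ^ 2 - x + 1/6 := by
    intro x
    simp [Polynomial.bernoulli, Finset.sum_range_succ, Polynomial.eval_finset_sum]
    ring
  have hcos := hasSum_one_div_nat_pow_mul_cos (k := 1) one_ne_zero hx
  have hzeta := hasSum_one_div_nat_pow_mul_cos (k := 1) one_ne_zero h0'
  rw [hB] at hcos hzeta
  simp only [mul_zero, Real.cos_zero, mul_one] at hzeta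
  -- f n = sin(2πnR)^2 / n^2
  have key : HasSum (fun n : ℕ => Real.sin (2 * π * n * R) ^ 2 / (n:ℝ) ^ 2)
      ((-1:ℝ)^(1+1) * (2*π)^(2*1) / 2 / (2*1).factorial * ((0:ℝ)^2 - 0 + 1/6) / 2
        - (-1:ℝ)^(1+1) * (2*π)^(2*1) / 2 / (2*1).factorial * ((2*R)^2 - 2*R + 1/6) / 2) := by
    have := (hzeta.div_const 2).sub (hcos.div_const 2)
    convert this using 2 with n
    · rfl
    rcases Nat.eq_zero_or_pos n with rfl | hn
    · simp
    · have hn' : (n:ℝ) ≠ 0 := Nat.cast_ne_zero.2 hn.ne'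
      rw [Real.sin_sq_eq_half_sub]
      have : 2 * π * (n:ℝ) * (2 * R) = 2 * (2 * π * n * R) := by ring
      rw [this]
      field_simp
      ring
  have hval : ((-1:ℝ)^(1+1) * (2*π)^(2*1) / 2 / (2*1).factorial * ((0:ℝ)^2 - 0 + 1/6) / 2
        - (-1:ℝ)^(1+1) * (2*π)^(2*1) / 2 / (2*1).factorial * ((2*R)^2 - 2*R + 1/6) / 2)
      = π ^ 2 * R * (1 - 2 * R) := by
    norm_num [Nat.factorial]; ring
  rw [hval] at key
  have h2 := (hasSum_nat_add_iff'
    (f := fun n : ℕ => Real.sin (2 * π * n * R) ^ 2 / (n:ℝ) ^ 2) 1).2 key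
  norm_num at h2
  exact h2.tsum_eq
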